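/- arXiv:1411.6950 — 3 statements merged into one kernel-verified Lean document; each statement's English description precedes it below -/
import Mathlib

section
/- Let ν₀ be a common multiple of the dilation weights υ₁,…,υₙ of a graded Lie group G and let s ∈ ν₀ℕ. Then σ ∈ H^s(Ĝ) if and only if Δ_{x^α} σ ∈ L²(Ĝ) for all multi-indices α with homogeneous degree [α] = Σ υ_j α_j ≤ s; moreover Σ_{[α]≤s} ‖Δ_{x^α} σ‖_{L²(Ĝ)} is an equivalent norm on H^s(Ĝ). -/
open MeasureTheory ENNReal

/-- The homogeneous quasi-norm `|x|_{ν₀} = (∑_j x_j^{2ν₀/υ_j})^{1/(2ν₀)}` on `ℝⁿ`. -/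
noncomputable def gradedQuasiNorm (n : ℕ) (υ : Fin n → ℕ) (ν₀ : ℕ) (x : Fin n → ℝ) : ℝ :=
  (∑ j, x j ^ (2 * (ν₀ / υ j))) ^ ((2 * (ν₀ : ℝ))⁻¹)

/-- The monomial `x^α = x₁^{α₁} ⋯ xₙ^{αₙ}`. -/
def gradedMonomial (n : ℕ) (α : Fin n → ℕ) (x : Fin n → ℝ) : ℝ :=
  ∏ j, x j ^ α j

/-- The finite set of multi-indices of homogeneous degree `[α] = ∑ υ_j α_j ≤ s`. -/
def gradedMultiIndices (n : ℕ) (υ : Fin n → ℕ) (s : ℕ) : Finset (Fin n → ℕ) :=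
  Finset.filter (fun α : Fin n → ℕ => (∑ j, υ j * α j) ≤ s)
    (Fintype.piFinset fun _ => Finset.range (s + 1))

private lemma sqrt_finset_sum_le {ι : Type*} (t : Finset ι) (f : ι → ℝ) (hf : ∀ i ∈ t, 0 ≤ f i) :
    Real.sqrt (∑ i ∈ t, f i) ≤ ∑ i ∈ t, Real.sqrt (f i) := by
  induction t using Finset.cons_induction with
  | empty => simp
  | cons a t ha ih =>
    rw [Finset.sum_cons, Finset.sum_cons]
    have h1 : 0 ≤ f a := hf a (Finset.mem_cons_self _ _)
    have h2 : 0 ≤ ∑ i ∈ t, f i :=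
      Finset.sum_nonneg fun i hi => hf i (Finset.mem_cons_of_mem hi)
    have key : Real.sqrt (f a + ∑ i ∈ t, f i)
        ≤ Real.sqrt (f a) + Real.sqrt (∑ i ∈ t, f i) := by
      have hle : f a + ∑ i ∈ t, f i
          ≤ (Real.sqrt (f a) + Real.sqrt (∑ i ∈ t, f i)) ^ 2 := by
        rw [add_sq, Real.sq_sqrt h1, Real.sq_sqrt h2]
        nlinarith [Real.sqrt_nonneg (f a), Real.sqrt_nonneg (∑ i ∈ t, f i)]
      calc Real.sqrt (f a + ∑ i ∈ t, f i)
          ≤ Real.sqrt ((Real.sqrt (f a) + Real.sqrt (∑ i ∈ t, f i)) ^ 2) :=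
            Real.sqrt_le_sqrt hle
        _ = _ := Real.sqrt_sq (by positivity)
    exact key.trans (by
      gcongr
      exact ih fun i hi => hf i (Finset.mem_cons_of_mem hi))

private lemma pow_sum_le_card_mul {n m : ℕ} (hm : 0 < m) (g : Fin n → ℝ) (hg : ∀ j, 0 ≤ g j) :
    (∑ j, g j) ^ m ≤ (n : ℝ) ^ m * ∑ j, g j ^ m := by
  rcases Nat.eq_zero_or_pos n with rfl | hn
  · simp [zero_pow hm.ne']
  have hcard : ((Finset.univ : Finset (Fin n)).card : ℝ) = n := by simp
  obtain ⟨m', rfl⟩ : ∃ m', m = m' + 1 := ⟨m - 1, by omega⟩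
  have h := pow_sum_div_card_le_sum_pow (s := (Finset.univ : Finset (Fin n)))
    (f := g) (fun i _ => hg i) m'
  rw [hcard, div_le_iff₀ (by positivity)] at h
  calc (∑ j, g j) ^ (m' + 1) ≤ (∑ j, g j ^ (m' + 1)) * (n : ℝ) ^ m' := h
    _ ≤ (n : ℝ) ^ (m' + 1) * ∑ j, g j ^ (m' + 1) := by
        rw [mul_comm]
        exact mul_le_mul (pow_le_pow_right₀ (by exact_mod_cast hn) (by omega)) le_rfl
          (Finset.sum_nonneg fun j _ => pow_nonneg (hg j) _) (by positivity)

/-- For `s ∈ ν₀ℕ`, `ν₀` a common multiple of the dilation weights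
`υ₁,…,υₙ` of a graded Lie group `G ≅ ℝⁿ`, the Sobolev space `H^s(Ĝ)` (viewed on the
spatial side via Plancherel with kernel `κ = ℱ_G⁻¹σ`): `σ ∈ H^s(Ĝ)` iff
`Δ_{x^α}σ ∈ L²(Ĝ)` (i.e. `x^α κ ∈ L²`) for all `α` with `[α] ≤ s`; moreover
`∑_{[α]≤s} ‖Δ_{x^α}σ‖_{L²(Ĝ)}` is an equivalent norm on `H^s(Ĝ)`. -/
theorem sobolev_dual_integer_exponent_equivalent_norm
    (n : ℕ) (υ : Fin n → ℕ) (hυ : ∀ j, 1 ≤ υ j)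
    (ν₀ : ℕ) (hν₀ : 0 < ν₀) (hdvd : ∀ j, υ j ∣ ν₀)
    (s : ℕ) (hs : 0 < s) (hsdvd : ν₀ ∣ s) :
    ∃ C > 0, ∀ κ : (Fin n → ℝ) → ℂ, Measurable κ →
      (MemLp (fun x => (((1 + gradedQuasiNorm n υ ν₀ x) ^ (s : ℝ) : ℝ)) * κ x) 2 volume ↔
        ∀ α ∈ gradedMultiIndices n υ s,
          MemLp (fun x => (gradedMonomial n α x : ℝ) * κ x) 2 volume) ∧
      eLpNorm (fun x => (((1 + gradedQuasiNorm n υ ν₀ x) ^ (s : ℝ) : ℝ)) * κ x) 2 volume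
        ≤ ENNReal.ofReal C * ∑ α ∈ gradedMultiIndices n υ s,
            eLpNorm (fun x => (gradedMonomial n α x : ℝ) * κ x) 2 volume ∧
      ∑ α ∈ gradedMultiIndices n υ s,
          eLpNorm (fun x => (gradedMonomial n α x : ℝ) * κ x) 2 volume
        ≤ ENNReal.ofReal C *
            eLpNorm (fun x => (((1 + gradedQuasiNorm n υ ν₀ x) ^ (s : ℝ) : ℝ)) * κ x) 2 volume := by
  classical
  obtain ⟨m, hm⟩ := hsdvd
  have hm1 : 1 ≤ m := by
    rcases Nat.eq_zero_or_pos m with rfl | h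
    · omega
    · exact h
  set A := gradedMultiIndices n υ s with hA
  set k : Fin n → ℕ := fun j => ν₀ / υ j with hkdef
  have hk : ∀ j, υ j * k j = ν₀ := fun j => Nat.mul_div_cancel' (hdvd j)
  have hυpos : ∀ j, 0 < υ j := fun j => hυ j
  have hk1 : ∀ j, 1 ≤ k j := fun j =>
    (Nat.one_le_div_iff (hυpos j)).mpr (Nat.le_of_dvd hν₀ (hdvd j))
  set T : (Fin n → ℝ) → ℝ := fun x => ∑ j, x j ^ (2 * k j) with hTdef
  have hterm0 : ∀ (x : Fin n → ℝ) j, 0 ≤ x j ^ (2 * k j) := by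
    intro x j
    rw [pow_mul]
    exact pow_nonneg (sq_nonneg _) _
  have hT0 : ∀ x, 0 ≤ T x := fun x => Finset.sum_nonneg fun j _ => hterm0 x j
  have hQT : ∀ x, gradedQuasiNorm n υ ν₀ x = T x ^ ((2 * (ν₀ : ℝ))⁻¹) := fun x => rfl
  set Q := gradedQuasiNorm n υ ν₀ with hQdef
  have hQ0 : ∀ x, 0 ≤ Q x := fun x => by
    rw [hQT]; exact Real.rpow_nonneg (hT0 x) _
  have hν : (ν₀ : ℝ) ≠ 0 := Nat.cast_ne_zero.2 hν₀.ne'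
  have hQpow : ∀ x, Q x ^ (2 * ν₀) = T x := by
    intro x
    rw [hQT, ← Real.rpow_natCast (T x ^ ((2 * (ν₀ : ℝ))⁻¹)) (2 * ν₀),
      ← Real.rpow_mul (hT0 x)]
    have : (2 * (ν₀ : ℝ))⁻¹ * ((2 * ν₀ : ℕ) : ℝ) = 1 := by
      push_cast
      field_simp
    rw [this, Real.rpow_one]
  have hrw : ∀ x, (1 + Q x) ^ (s : ℝ) = (1 + Q x) ^ s := fun x => Real.rpow_natCast _ s
  -- Lower bound: each monomial with `[α] ≤ s` is dominated by `(1+Q)^s`.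
  have L1 : ∀ α ∈ A, ∀ x, |gradedMonomial n α x| ≤ (1 + Q x) ^ s := by
    intro α hα x
    rw [hA, gradedMultiIndices, Finset.mem_filter] at hα
    obtain ⟨-, hdeg⟩ := hα
    have hxj : ∀ j, |x j| ≤ (1 + Q x) ^ (υ j) := by
      intro j
      have h2k : 2 * k j ≠ 0 := by have := hk1 j; omega
      refine le_of_pow_le_pow_left₀ h2k (pow_nonneg (by linarith [hQ0 x]) _) ?_
      calc |x j| ^ (2 * k j) = x j ^ (2 * k j) := by
            rw [← abs_pow, abs_of_nonneg (hterm0 x j)]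
        _ ≤ T x := Finset.single_le_sum (f := fun j => x j ^ (2 * k j))
              (fun i _ => hterm0 x i) (Finset.mem_univ j)
        _ = Q x ^ (2 * ν₀) := (hQpow x).symm
        _ ≤ (1 + Q x) ^ (2 * ν₀) := pow_le_pow_left₀ (hQ0 x) (by linarith [hQ0 x]) _
        _ = ((1 + Q x) ^ (υ j)) ^ (2 * k j) := by
            rw [← pow_mul, show υ j * (2 * k j) = 2 * (υ j * k j) by ring, hk j]
    calc |gradedMonomial n α x| = ∏ j, |x j| ^ α j := by
          simp only [gradedMonomial, Finset.abs_prod, abs_pow]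
      _ ≤ ∏ j, ((1 + Q x) ^ (υ j)) ^ α j :=
          Finset.prod_le_prod (fun j _ => by positivity)
            (fun j _ => pow_le_pow_left₀ (abs_nonneg _) (hxj j) _)
      _ = (1 + Q x) ^ (∑ j, υ j * α j) := by
          simp_rw [← pow_mul]
          exact Finset.prod_pow_eq_pow_sum _ _ _
      _ ≤ (1 + Q x) ^ s := pow_le_pow_right₀ (by linarith [hQ0 x]) hdeg
  -- Membership facts about `A`.
  have h0A : (fun _ : Fin n => 0) ∈ A := by
    rw [hA, gradedMultiIndices, Finset.mem_filter]
    refine ⟨?_, by simp⟩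
    rw [Fintype.mem_piFinset]
    intro i
    simp
  have hkms : ∀ j, k j * m ≤ s := by
    intro j
    calc k j * m ≤ ν₀ * m := Nat.mul_le_mul_right m (Nat.div_le_self _ _)
      _ = s := hm.symm
  set e : Fin n → (Fin n → ℕ) := fun j => Pi.single j (k j * m) with hedef
  have hejA : ∀ j, e j ∈ A := by
    intro j
    rw [hA, gradedMultiIndices, Finset.mem_filter]
    constructor
    · rw [Fintype.mem_piFinset]
      intro i
      rw [Finset.mem_range, Nat.lt_succ_iff]
      rcases eq_or_ne i j with rfl | hij
      · simpa [hedef] using hkms i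
      · simp [hedef, Pi.single_apply, hij]
    · have hsum : ∑ i, υ i * e j i = υ j * e j j :=
        Finset.sum_eq_single j (fun i _ hij => by simp [hedef, Pi.single_apply, hij])
          (fun h => absurd (Finset.mem_univ j) h)
      have hejj : e j j = k j * m := by simp [hedef]
      rw [hsum, hejj, ← mul_assoc, hk j, ← hm]
  have hMej : ∀ j x, gradedMonomial n (e j) x = x j ^ (k j * m) := by
    intro j x
    rw [gradedMonomial]
    have hprod : ∏ i, x i ^ e j i = x j ^ e j j :=
      Finset.prod_eq_single j (fun i _ hij => by simp [hedef, Pi.single_apply, hij])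
        (fun h => absurd (Finset.mem_univ j) h)
    rw [hprod]
    simp [hedef]
  -- The sum of monomials over A.
  set S : (Fin n → ℝ) → ℝ := fun x => ∑ α ∈ A, |gradedMonomial n α x| with hSdef
  have hS0 : ∀ x, 0 ≤ S x := fun x => Finset.sum_nonneg fun α _ => abs_nonneg _
  have hS1 : ∀ x, 1 ≤ S x := by
    intro x
    have := Finset.single_le_sum (f := fun α => |gradedMonomial n α x|)
      (fun α _ => abs_nonneg _) h0A
    simpa [hSdef, gradedMonomial] using this
  have hsum_e : ∀ x, ∑ j, |x j ^ (k j * m)| ≤ S x := by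
    intro x
    have hinj : Function.Injective e := by
      intro j j' hjj'
      by_contra hne
      have h1 : e j j = k j * m := by simp [hedef]
      have h2 : e j' j = 0 := by simp [hedef, Pi.single_apply, Ne.symm hne]
      have := congrFun hjj' j
      rw [h1, h2] at this
      have hkj := hk1 j
      have hk1m : 1 ≤ k j * m := Nat.one_le_iff_ne_zero.2 (Nat.mul_ne_zero (by omega) (by omega))
      omega
    calc ∑ j, |x j ^ (k j * m)| = ∑ j, |gradedMonomial n (e j) x| := by
          refine Finset.sum_congr rfl fun j _ => ?_
          rw [hMej]
      _ = ∑ β ∈ Finset.univ.image e, |gradedMonomial n β x| := by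
          rw [Finset.sum_image (fun a _ b _ h => hinj h)]
      _ ≤ S x := by
          refine Finset.sum_le_sum_of_subset_of_nonneg ?_ (fun _ _ _ => abs_nonneg _)
          intro β hβ
          obtain ⟨j, -, rfl⟩ := Finset.mem_image.1 hβ
          exact hejA j
  -- Upper bound constant.
  set C₀ : ℝ := 2 ^ s * (1 + Real.sqrt ((n : ℝ) ^ m)) with hC₀def
  have hC₀pos : 0 < C₀ := by positivity
  have hQs : ∀ x, Q x ^ s ≤ Real.sqrt ((n : ℝ) ^ m) * S x := by
    intro x
    have hQsr : Q x ^ s = Real.sqrt (T x ^ m) := by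
      rw [hQT, ← Real.rpow_natCast (T x ^ ((2 * (ν₀ : ℝ))⁻¹)) s, ← Real.rpow_mul (hT0 x),
        Real.sqrt_eq_rpow, ← Real.rpow_natCast (T x) m, ← Real.rpow_mul (hT0 x)]
      congr 1
      rw [hm]
      push_cast
      field_simp
    have hTm : T x ^ m ≤ (n : ℝ) ^ m * ∑ j, (x j ^ (2 * k j)) ^ m :=
      pow_sum_le_card_mul (by omega) (fun j => x j ^ (2 * k j)) (hterm0 x)
    calc Q x ^ s = Real.sqrt (T x ^ m) := hQsr
      _ ≤ Real.sqrt ((n : ℝ) ^ m * ∑ j, (x j ^ (2 * k j)) ^ m) := Real.sqrt_le_sqrt hTm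
      _ = Real.sqrt ((n : ℝ) ^ m) * Real.sqrt (∑ j, (x j ^ (2 * k j)) ^ m) :=
          Real.sqrt_mul (by positivity) _
      _ ≤ Real.sqrt ((n : ℝ) ^ m) * ∑ j, Real.sqrt ((x j ^ (2 * k j)) ^ m) := by
          refine mul_le_mul_of_nonneg_left ?_ (Real.sqrt_nonneg _)
          exact sqrt_finset_sum_le _ _ (fun j _ => pow_nonneg (hterm0 x j) _)
      _ = Real.sqrt ((n : ℝ) ^ m) * ∑ j, |x j ^ (k j * m)| := by
          congr 1
          refine Finset.sum_congr rfl fun j _ => ?_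
          rw [show (x j ^ (2 * k j)) ^ m = (x j ^ (k j * m)) ^ 2 by
            rw [← pow_mul, ← pow_mul]; ring_nf, Real.sqrt_sq_eq_abs]
      _ ≤ Real.sqrt ((n : ℝ) ^ m) * S x :=
          mul_le_mul_of_nonneg_left (hsum_e x) (Real.sqrt_nonneg _)
  have L2 : ∀ x, (1 + Q x) ^ s ≤ C₀ * S x := by
    intro x
    have hmax : 1 + Q x ≤ 2 * max 1 (Q x) := by
      have h1 := le_max_left 1 (Q x)
      have h2 := le_max_right 1 (Q x)
      linarith
    have hmaxpow : (max 1 (Q x)) ^ s ≤ 1 + Q x ^ s := by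
      rcases le_total (Q x) 1 with h | h
      · rw [max_eq_left h, one_pow]
        have : 0 ≤ Q x ^ s := pow_nonneg (hQ0 x) _
        linarith
      · rw [max_eq_right h]
        linarith
    have step1 : (1 + Q x) ^ s ≤ 2 ^ s * (1 + Q x ^ s) := by
      calc (1 + Q x) ^ s ≤ (2 * max 1 (Q x)) ^ s :=
            pow_le_pow_left₀ (by linarith [hQ0 x]) hmax _
        _ = 2 ^ s * (max 1 (Q x)) ^ s := mul_pow _ _ _
        _ ≤ 2 ^ s * (1 + Q x ^ s) := by
            refine mul_le_mul_of_nonneg_left hmaxpow (by positivity)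
    have step2 : 1 + Q x ^ s ≤ (1 + Real.sqrt ((n : ℝ) ^ m)) * S x := by
      have h1 := hS1 x
      have h2 := hQs x
      have h3 := hS0 x
      nlinarith [Real.sqrt_nonneg ((n : ℝ) ^ m)]
    calc (1 + Q x) ^ s ≤ 2 ^ s * (1 + Q x ^ s) := step1
      _ ≤ 2 ^ s * ((1 + Real.sqrt ((n : ℝ) ^ m)) * S x) :=
          mul_le_mul_of_nonneg_left step2 (by positivity)
      _ = C₀ * S x := by rw [hC₀def]; ring
  -- The final constant.
  refine ⟨C₀ + A.card + 1, by positivity, fun κ hκ => ?_⟩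
  have hMmeas : ∀ α : Fin n → ℕ, Measurable fun x : Fin n → ℝ => gradedMonomial n α x := by
    intro α
    exact Finset.measurable_prod _ fun j _ => (measurable_pi_apply j).pow_const _
  have hfαmeas : ∀ α : Fin n → ℕ,
      Measurable fun x : Fin n → ℝ => ((gradedMonomial n α x : ℝ) : ℂ) * κ x := by
    intro α
    exact (Complex.measurable_ofReal.comp (hMmeas α)).mul hκ
  have hQcont : Continuous Q := by
    have hTc : Continuous T := continuous_finset_sum _ fun j _ => (continuous_apply j).pow _
    have : Continuous fun t : ℝ => t ^ ((2 * (ν₀ : ℝ))⁻¹) :=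
      Real.continuous_rpow_const (by positivity)
    exact this.comp hTc
  have hfWmeas : Measurable fun x : Fin n → ℝ => (((1 + Q x) ^ (s : ℝ) : ℝ) : ℂ) * κ x := by
    have h1 : Measurable fun x : Fin n → ℝ => ((1 + Q x) ^ (s : ℝ) : ℝ) := by
      have : (fun x : Fin n → ℝ => ((1 + Q x) ^ (s : ℝ) : ℝ))
          = fun x => (1 + Q x) ^ s := funext fun x => hrw x
      rw [this]
      exact ((continuous_const.add hQcont).pow s).measurable
    exact (Complex.measurable_ofReal.comp h1).mul hκ
  -- Pointwise norm identities and bounds.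
  have hNα : ∀ (α : Fin n → ℕ) x, ‖((gradedMonomial n α x : ℝ) : ℂ) * κ x‖
      = |gradedMonomial n α x| * ‖κ x‖ := by
    intro α x
    rw [norm_mul, Complex.norm_real, Real.norm_eq_abs]
  have hNW : ∀ x, ‖(((1 + Q x) ^ (s : ℝ) : ℝ) : ℂ) * κ x‖ = (1 + Q x) ^ s * ‖κ x‖ := by
    intro x
    rw [norm_mul, Complex.norm_real, Real.norm_eq_abs, hrw,
      abs_of_nonneg (pow_nonneg (by linarith [hQ0 x]) s)]
  have hle1 : ∀ α ∈ A, ∀ x, ‖((gradedMonomial n α x : ℝ) : ℂ) * κ x‖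
      ≤ ‖(((1 + Q x) ^ (s : ℝ) : ℝ) : ℂ) * κ x‖ := by
    intro α hα x
    rw [hNα, hNW]
    exact mul_le_mul_of_nonneg_right (L1 α hα x) (norm_nonneg _)
  set g : (Fin n → ℝ) → ℝ := fun x => ∑ α ∈ A, ‖((gradedMonomial n α x : ℝ) : ℂ) * κ x‖
    with hgdef
  have hg0 : ∀ x, 0 ≤ g x := fun x => Finset.sum_nonneg fun α _ => norm_nonneg _
  have hle2 : ∀ x, ‖(((1 + Q x) ^ (s : ℝ) : ℝ) : ℂ) * κ x‖ ≤ C₀ * g x := by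
    intro x
    rw [hNW]
    calc (1 + Q x) ^ s * ‖κ x‖ ≤ (C₀ * S x) * ‖κ x‖ :=
          mul_le_mul_of_nonneg_right (L2 x) (norm_nonneg _)
      _ = C₀ * (S x * ‖κ x‖) := by ring
      _ = C₀ * g x := by
          congr 1
          rw [hSdef, hgdef, Finset.sum_mul]
          exact Finset.sum_congr rfl fun α _ => (hNα α x).symm
  refine ⟨?_, ?_, ?_⟩
  · constructor
    · intro hW α hα
      exact hW.of_le (hfαmeas α).aestronglyMeasurable (Filter.Eventually.of_forall (hle1 α hα))
    · intro hall
      have hgmem : MemLp g 2 volume := by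
        refine memLp_finset_sum A fun α hα => (hall α hα).norm
      have hCg : MemLp (fun x => C₀ * g x) 2 volume := hgmem.const_mul C₀
      refine hCg.of_le hfWmeas.aestronglyMeasurable (Filter.Eventually.of_forall fun x => ?_)
      rw [Real.norm_eq_abs, abs_of_nonneg (mul_nonneg hC₀pos.le (hg0 x))]
      exact hle2 x
  · -- eLpNorm upper bound
    have h1 : eLpNorm (fun x => (((1 + Q x) ^ (s : ℝ) : ℝ)) * κ x) 2 volume
        ≤ eLpNorm (fun x => C₀ * g x) 2 volume := by
      refine eLpNorm_mono fun x => ?_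
      rw [Real.norm_eq_abs, abs_of_nonneg (mul_nonneg hC₀pos.le (hg0 x))]
      exact hle2 x
    have h2 : eLpNorm (fun x => C₀ * g x) 2 volume
        = (‖C₀‖₊ : ℝ≥0∞) * eLpNorm g 2 volume := by
      have : (fun x => C₀ * g x) = C₀ • g := by
        funext x; simp [smul_eq_mul]
      rw [this, eLpNorm_const_smul, enorm_eq_nnnorm]
    have h3 : eLpNorm g 2 volume
        ≤ ∑ α ∈ A, eLpNorm (fun x => ((gradedMonomial n α x : ℝ) : ℂ) * κ x) 2 volume := by
      have hgsum : g = ∑ α ∈ A,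
          (fun x => ‖((gradedMonomial n α x : ℝ) : ℂ) * κ x‖) := by
        funext x
        rw [hgdef, Finset.sum_apply]
      rw [hgsum]
      refine le_trans (eLpNorm_sum_le (fun α _ => ((hfαmeas α).norm).aestronglyMeasurable)
        (by norm_num)) ?_
      refine le_of_eq (Finset.sum_congr rfl fun α _ => ?_)
      exact eLpNorm_norm _
    calc eLpNorm (fun x => (((1 + Q x) ^ (s : ℝ) : ℝ)) * κ x) 2 volume
        ≤ (‖C₀‖₊ : ℝ≥0∞) * eLpNorm g 2 volume := h1.trans h2.le
      _ ≤ ENNReal.ofReal (C₀ + A.card + 1) * ∑ α ∈ A,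
            eLpNorm (fun x => ((gradedMonomial n α x : ℝ) : ℂ) * κ x) 2 volume := by
          refine mul_le_mul ?_ h3 zero_le zero_le
          rw [← enorm_eq_nnnorm, Real.enorm_eq_ofReal hC₀pos.le]
          exact ENNReal.ofReal_le_ofReal (by
            have := Nat.cast_nonneg (α := ℝ) A.card
            linarith)
  · -- reverse bound
    have h1 : ∀ α ∈ A,
        eLpNorm (fun x => ((gradedMonomial n α x : ℝ) : ℂ) * κ x) 2 volume
        ≤ eLpNorm (fun x => (((1 + Q x) ^ (s : ℝ) : ℝ)) * κ x) 2 volume := by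
      intro α hα
      exact eLpNorm_mono (hle1 α hα)
    calc ∑ α ∈ A, eLpNorm (fun x => ((gradedMonomial n α x : ℝ) : ℂ) * κ x) 2 volume
        ≤ ∑ _α ∈ A, eLpNorm (fun x => (((1 + Q x) ^ (s : ℝ) : ℝ)) * κ x) 2 volume :=
          Finset.sum_le_sum h1
      _ = (A.card : ℝ≥0∞) * eLpNorm (fun x => (((1 + Q x) ^ (s : ℝ) : ℝ)) * κ x) 2 volume := by
          rw [Finset.sum_const, nsmul_eq_mul]
      _ ≤ ENNReal.ofReal (C₀ + A.card + 1) *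
            eLpNorm (fun x => (((1 + Q x) ^ (s : ℝ) : ℝ)) * κ x) 2 volume := by
          refine mul_le_mul ?_ le_rfl zero_le zero_le
          rw [← ENNReal.ofReal_natCast A.card]
          exact ENNReal.ofReal_le_ofReal (by linarith [hC₀pos])
end

section
/- For σ, τ ∈ H^s(Ĝ), the pointwise operator product στ = {σ(π)τ(π)} satisfies ‖στ‖_{H^s} ≤ C(‖σ‖_{H^s}‖ℱ_G⁻¹τ‖_{L¹(G)} + ‖ℱ_G⁻¹σ‖_{L¹(G)}‖τ‖_{H^s}) with C independent of σ, τ. Consequently, for s > Q/2, H^s(Ĝ) is a (non-commutative) algebra under this product. -/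
open MeasureTheory ENNReal

section sda_aux

variable {G : Type*} [Group G] [MeasurableSpace G] [MeasurableMul₂ G] [MeasurableInv G]
  {μ : MeasureTheory.Measure G} [SigmaFinite μ]

private lemma sda_conj22 : Real.HolderConjugate 2 2 := Real.HolderConjugate.two_two

private lemma sda_half_sq (t : ℝ≥0∞) : (t ^ (1/2 : ℝ)) ^ (2 : ℝ) = t := by
  rw [← ENNReal.rpow_mul]; norm_num

private lemma sda_sq_half (t : ℝ≥0∞) : (t ^ (2 : ℝ)) ^ (1/2 : ℝ) = t := by
  rw [← ENNReal.rpow_mul]; norm_num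

private lemma sda_half_mul_half (t : ℝ≥0∞) : t ^ (1/2 : ℝ) * t ^ (1/2 : ℝ) = t := by
  rw [← ENNReal.rpow_add_of_nonneg (x := t) (1/2) (1/2) (by norm_num) (by norm_num)]
  norm_num

private lemma sda_lintegral_inv_eq [μ.IsMulLeftInvariant] [μ.IsMulRightInvariant]
    {h : G → ℝ≥0∞} (hh : Measurable h) :
    ∫⁻ x, h x⁻¹ ∂μ = ∫⁻ x, h x ∂μ := by
  rcases eq_or_ne μ 0 with rfl | hμ
  · simp
  obtain ⟨n, hn⟩ : ∃ n, 0 < μ (spanningSets μ n) := by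
    by_contra hcon
    push_neg at hcon
    have huniv : μ Set.univ = 0 := by
      rw [← iUnion_spanningSets μ]
      exact measure_iUnion_null fun n => le_zero_iff.mp (hcon n)
    exact hμ (Measure.measure_univ_eq_zero.mp huniv)
  set S := spanningSets μ n with hSdef
  have hS : MeasurableSet S := measurableSet_spanningSets μ n
  have hfin : μ S < ∞ := measure_spanningSets_lt_top μ n
  set g : G → ℝ≥0∞ := S.indicator fun _ => (μ S)⁻¹ with hgdef
  have hg : Measurable g := measurable_const.indicator hS
  have hg1 : ∫⁻ x, g x ∂μ = 1 := by
    rw [hgdef, lintegral_indicator_const hS]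
    exact ENNReal.inv_mul_cancel hn.ne' hfin.ne
  have m1 : Measurable (Function.uncurry fun x y => g (y * x) * h x⁻¹) :=
    (hg.comp (measurable_snd.mul measurable_fst)).mul (hh.comp measurable_fst.inv)
  have m2 : Measurable (Function.uncurry fun y x => g x * h (x⁻¹ * y)) :=
    (hg.comp measurable_snd).mul (hh.comp (measurable_snd.inv.mul measurable_fst))
  calc ∫⁻ x, h x⁻¹ ∂μ
      = ∫⁻ x, (∫⁻ y, g (y * x) ∂μ) * h x⁻¹ ∂μ := by
        refine (lintegral_congr fun x => ?_).symm
        rw [lintegral_mul_right_eq_self g x, hg1, one_mul]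
    _ = ∫⁻ x, ∫⁻ y, g (y * x) * h x⁻¹ ∂μ ∂μ := by
        refine lintegral_congr fun x => ?_
        exact (lintegral_mul_const (f := fun y => g (y * x)) (h x⁻¹)
          (hg.comp (measurable_mul_const x))).symm
    _ = ∫⁻ y, ∫⁻ x, g (y * x) * h x⁻¹ ∂μ ∂μ := lintegral_lintegral_swap m1.aemeasurable
    _ = ∫⁻ y, ∫⁻ x, g x * h (x⁻¹ * y) ∂μ ∂μ := by
        refine lintegral_congr fun y => ?_
        rw [← lintegral_mul_left_eq_self (fun x => g (y * x) * h x⁻¹) y⁻¹]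
        refine lintegral_congr fun x => ?_
        rw [mul_inv_rev, inv_inv, ← mul_assoc, mul_inv_cancel, one_mul]
    _ = ∫⁻ x, ∫⁻ y, g x * h (x⁻¹ * y) ∂μ ∂μ :=
        lintegral_lintegral_swap (f := fun y x => g x * h (x⁻¹ * y)) m2.aemeasurable
    _ = ∫⁻ x, g x * ∫⁻ y, h (x⁻¹ * y) ∂μ ∂μ := by
        refine lintegral_congr fun x => ?_
        exact lintegral_const_mul (f := fun y => h (x⁻¹ * y)) (g x)
          (hh.comp (measurable_const_mul x⁻¹))
    _ = ∫⁻ x, g x * ∫⁻ y, h y ∂μ ∂μ := by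
        refine lintegral_congr fun x => ?_
        rw [lintegral_mul_left_eq_self h x⁻¹]
    _ = ∫⁻ x, h x ∂μ := by
        rw [lintegral_mul_const _ hg, hg1, one_mul]

private lemma sda_young_one [μ.IsMulLeftInvariant]
    {u v : G → ℝ≥0∞} (hu : Measurable u) (hv : Measurable v) :
    (∫⁻ x, (∫⁻ y, u y * v (y⁻¹ * x) ∂μ) ^ (2:ℝ) ∂μ) ^ (1/2:ℝ)
      ≤ (∫⁻ y, u y ∂μ) * (∫⁻ x, v x ^ (2:ℝ) ∂μ) ^ (1/2:ℝ) := by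
  set A := ∫⁻ y, u y ∂μ with hA
  set B := ∫⁻ x, v x ^ (2:ℝ) ∂μ with hB
  have key : ∀ x, (∫⁻ y, u y * v (y⁻¹ * x) ∂μ) ^ (2:ℝ)
      ≤ A * ∫⁻ y, u y * v (y⁻¹ * x) ^ (2:ℝ) ∂μ := by
    intro x
    have hvx : Measurable fun y => v (y⁻¹ * x) := hv.comp (measurable_inv.mul_const x)
    have h1 : ∫⁻ y, u y * v (y⁻¹ * x) ∂μ
        ≤ A ^ (1/2:ℝ) * (∫⁻ y, u y * v (y⁻¹ * x) ^ (2:ℝ) ∂μ) ^ (1/2:ℝ) := by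
      calc ∫⁻ y, u y * v (y⁻¹ * x) ∂μ
          = ∫⁻ y, ((fun y => (u y) ^ (1/2:ℝ)) * fun y => (u y) ^ (1/2:ℝ) * v (y⁻¹ * x)) y ∂μ := by
            refine lintegral_congr fun y => ?_
            simp only [Pi.mul_apply]
            rw [← mul_assoc, sda_half_mul_half]
        _ ≤ (∫⁻ y, ((u y) ^ (1/2:ℝ)) ^ (2:ℝ) ∂μ) ^ (1/(2:ℝ))
            * (∫⁻ y, ((u y) ^ (1/2:ℝ) * v (y⁻¹ * x)) ^ (2:ℝ) ∂μ) ^ (1/(2:ℝ)) :=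
            ENNReal.lintegral_mul_le_Lp_mul_Lq μ sda_conj22
              (hu.pow_const _).aemeasurable ((hu.pow_const _).mul hvx).aemeasurable
        _ = A ^ (1/2:ℝ) * (∫⁻ y, u y * v (y⁻¹ * x) ^ (2:ℝ) ∂μ) ^ (1/2:ℝ) := by
            congr 2
            · exact lintegral_congr fun y => sda_half_sq _
            · refine lintegral_congr fun y => ?_
              rw [ENNReal.mul_rpow_of_nonneg _ _ (by norm_num : (0:ℝ) ≤ 2), sda_half_sq]
    calc (∫⁻ y, u y * v (y⁻¹ * x) ∂μ) ^ (2:ℝ)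
        ≤ (A ^ (1/2:ℝ) * (∫⁻ y, u y * v (y⁻¹ * x) ^ (2:ℝ) ∂μ) ^ (1/2:ℝ)) ^ (2:ℝ) :=
          ENNReal.rpow_le_rpow h1 (by norm_num)
      _ = A * ∫⁻ y, u y * v (y⁻¹ * x) ^ (2:ℝ) ∂μ := by
          rw [ENNReal.mul_rpow_of_nonneg _ _ (by norm_num : (0:ℝ) ≤ 2), sda_half_sq, sda_half_sq]
  have mprod : Measurable (Function.uncurry fun x y => u y * v (y⁻¹ * x) ^ (2:ℝ)) :=
    (hu.comp measurable_snd).mul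
      ((hv.comp (measurable_snd.inv.mul measurable_fst)).pow_const _)
  have meas_inner : Measurable fun x => ∫⁻ y, u y * v (y⁻¹ * x) ^ (2:ℝ) ∂μ :=
    Measurable.lintegral_prod_right' (f := fun p : G × G => u p.2 * v (p.2⁻¹ * p.1) ^ (2:ℝ)) mprod
  have step : ∫⁻ x, (∫⁻ y, u y * v (y⁻¹ * x) ∂μ) ^ (2:ℝ) ∂μ ≤ A * (A * B) := by
    calc ∫⁻ x, (∫⁻ y, u y * v (y⁻¹ * x) ∂μ) ^ (2:ℝ) ∂μ
        ≤ ∫⁻ x, A * ∫⁻ y, u y * v (y⁻¹ * x) ^ (2:ℝ) ∂μ ∂μ := lintegral_mono key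
      _ = A * ∫⁻ x, ∫⁻ y, u y * v (y⁻¹ * x) ^ (2:ℝ) ∂μ ∂μ :=
          lintegral_const_mul A meas_inner
      _ = A * ∫⁻ y, ∫⁻ x, u y * v (y⁻¹ * x) ^ (2:ℝ) ∂μ ∂μ := by
          rw [lintegral_lintegral_swap mprod.aemeasurable]
      _ = A * ∫⁻ y, u y * B ∂μ := by
          congr 1
          refine lintegral_congr fun y => ?_
          rw [lintegral_const_mul (f := fun x => v (y⁻¹ * x) ^ (2:ℝ)) (u y)
            ((hv.comp (measurable_const_mul y⁻¹)).pow_const _)]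
          congr 1
          exact lintegral_mul_left_eq_self (fun z => v z ^ (2:ℝ)) y⁻¹
      _ = A * (A * B) := by rw [lintegral_mul_const _ hu]
  calc (∫⁻ x, (∫⁻ y, u y * v (y⁻¹ * x) ∂μ) ^ (2:ℝ) ∂μ) ^ (1/2:ℝ)
      ≤ (A * (A * B)) ^ (1/2:ℝ) := ENNReal.rpow_le_rpow step (by norm_num)
    _ = A * B ^ (1/2:ℝ) := by
        rw [← mul_assoc, ENNReal.mul_rpow_of_nonneg _ _ (by norm_num : (0:ℝ) ≤ 1/2),
          ENNReal.mul_rpow_of_nonneg _ _ (by norm_num : (0:ℝ) ≤ 1/2), sda_half_mul_half]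

private lemma sda_young_two [μ.IsMulLeftInvariant] [μ.IsMulRightInvariant]
    {u v : G → ℝ≥0∞} (hu : Measurable u) (hv : Measurable v) :
    (∫⁻ x, (∫⁻ y, u y * v (y⁻¹ * x) ∂μ) ^ (2:ℝ) ∂μ) ^ (1/2:ℝ)
      ≤ (∫⁻ x, u x ^ (2:ℝ) ∂μ) ^ (1/2:ℝ) * ∫⁻ y, v y ∂μ := by
  set A := ∫⁻ x, u x ^ (2:ℝ) ∂μ with hA
  set B := ∫⁻ y, v y ∂μ with hB
  have hslice : ∀ x, ∫⁻ y, v (y⁻¹ * x) ∂μ = B := by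
    intro x
    have : ∫⁻ y, v (y⁻¹ * x) ∂μ = ∫⁻ y, (fun z => v (z * x)) y⁻¹ ∂μ := rfl
    rw [this, sda_lintegral_inv_eq (h := fun z => v (z * x)) (hv.comp (measurable_mul_const x))]
    exact lintegral_mul_right_eq_self v x
  have key : ∀ x, (∫⁻ y, u y * v (y⁻¹ * x) ∂μ) ^ (2:ℝ)
      ≤ (∫⁻ y, u y ^ (2:ℝ) * v (y⁻¹ * x) ∂μ) * B := by
    intro x
    have hvx : Measurable fun y => v (y⁻¹ * x) := hv.comp (measurable_inv.mul_const x)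
    have h1 : ∫⁻ y, u y * v (y⁻¹ * x) ∂μ
        ≤ (∫⁻ y, u y ^ (2:ℝ) * v (y⁻¹ * x) ∂μ) ^ (1/2:ℝ) * B ^ (1/2:ℝ) := by
      calc ∫⁻ y, u y * v (y⁻¹ * x) ∂μ
          = ∫⁻ y, ((fun y => u y * v (y⁻¹ * x) ^ (1/2:ℝ)) * fun y => v (y⁻¹ * x) ^ (1/2:ℝ)) y ∂μ := by
            refine lintegral_congr fun y => ?_
            simp only [Pi.mul_apply]
            rw [mul_assoc, sda_half_mul_half]
        _ ≤ (∫⁻ y, (u y * v (y⁻¹ * x) ^ (1/2:ℝ)) ^ (2:ℝ) ∂μ) ^ (1/(2:ℝ))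
            * (∫⁻ y, (v (y⁻¹ * x) ^ (1/2:ℝ)) ^ (2:ℝ) ∂μ) ^ (1/(2:ℝ)) :=
            ENNReal.lintegral_mul_le_Lp_mul_Lq μ sda_conj22
              (hu.mul (hvx.pow_const _)).aemeasurable (hvx.pow_const _).aemeasurable
        _ = (∫⁻ y, u y ^ (2:ℝ) * v (y⁻¹ * x) ∂μ) ^ (1/2:ℝ) * B ^ (1/2:ℝ) := by
            congr 2
            · refine lintegral_congr fun y => ?_
              rw [ENNReal.mul_rpow_of_nonneg _ _ (by norm_num : (0:ℝ) ≤ 2), sda_half_sq]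
            · rw [lintegral_congr fun y => sda_half_sq (v (y⁻¹ * x))]
              exact hslice x
    calc (∫⁻ y, u y * v (y⁻¹ * x) ∂μ) ^ (2:ℝ)
        ≤ ((∫⁻ y, u y ^ (2:ℝ) * v (y⁻¹ * x) ∂μ) ^ (1/2:ℝ) * B ^ (1/2:ℝ)) ^ (2:ℝ) :=
          ENNReal.rpow_le_rpow h1 (by norm_num)
      _ = (∫⁻ y, u y ^ (2:ℝ) * v (y⁻¹ * x) ∂μ) * B := by
          rw [ENNReal.mul_rpow_of_nonneg _ _ (by norm_num : (0:ℝ) ≤ 2), sda_half_sq, sda_half_sq]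
  have mprod : Measurable (Function.uncurry fun x y => u y ^ (2:ℝ) * v (y⁻¹ * x)) :=
    ((hu.comp measurable_snd).pow_const _).mul
      (hv.comp (measurable_snd.inv.mul measurable_fst))
  have meas_inner : Measurable fun x => ∫⁻ y, u y ^ (2:ℝ) * v (y⁻¹ * x) ∂μ :=
    Measurable.lintegral_prod_right' (f := fun p : G × G => u p.2 ^ (2:ℝ) * v (p.2⁻¹ * p.1)) mprod
  have step : ∫⁻ x, (∫⁻ y, u y * v (y⁻¹ * x) ∂μ) ^ (2:ℝ) ∂μ ≤ A * B * B := by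
    calc ∫⁻ x, (∫⁻ y, u y * v (y⁻¹ * x) ∂μ) ^ (2:ℝ) ∂μ
        ≤ ∫⁻ x, (∫⁻ y, u y ^ (2:ℝ) * v (y⁻¹ * x) ∂μ) * B ∂μ := lintegral_mono key
      _ = (∫⁻ x, ∫⁻ y, u y ^ (2:ℝ) * v (y⁻¹ * x) ∂μ ∂μ) * B :=
          lintegral_mul_const B meas_inner
      _ = (∫⁻ y, ∫⁻ x, u y ^ (2:ℝ) * v (y⁻¹ * x) ∂μ ∂μ) * B := by
          rw [lintegral_lintegral_swap mprod.aemeasurable]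
      _ = (∫⁻ y, u y ^ (2:ℝ) * B ∂μ) * B := by
          congr 1
          refine lintegral_congr fun y => ?_
          rw [lintegral_const_mul (f := fun x => v (y⁻¹ * x)) (u y ^ (2:ℝ))
            (hv.comp (measurable_const_mul y⁻¹))]
          congr 1
          exact lintegral_mul_left_eq_self v y⁻¹
      _ = A * B * B := by rw [lintegral_mul_const _ (hu.pow_const _)]
  calc (∫⁻ x, (∫⁻ y, u y * v (y⁻¹ * x) ∂μ) ^ (2:ℝ) ∂μ) ^ (1/2:ℝ)
      ≤ (A * B * B) ^ (1/2:ℝ) := ENNReal.rpow_le_rpow step (by norm_num)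
    _ = A ^ (1/2:ℝ) * B := by
        rw [mul_assoc, ENNReal.mul_rpow_of_nonneg _ _ (by norm_num : (0:ℝ) ≤ 1/2),
          ENNReal.mul_rpow_of_nonneg _ _ (by norm_num : (0:ℝ) ≤ 1/2), sda_half_mul_half]

end sda_aux

/-- The algebra property of `H^s(Ĝ)`, phrased on the spatial side:
with `f = ℱ_G⁻¹σ`, `g = ℱ_G⁻¹τ` one has `ℱ_G⁻¹(στ) = g * f` (group convolution), so
`‖στ‖_{H^s} = ‖ω_s (g∗f)‖_{L²} ≤ C(‖ω_s f‖_{L²} ‖g‖_{L¹} + ‖f‖_{L¹} ‖ω_s g‖_{L²})`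
with `ω_s = (1+|·|)^s`. Consequently, for `s > Q/2` (so that the Sobolev embedding
`‖f‖_{L¹} ≲ ‖ω_s f‖_{L²}` holds), `H^s(Ĝ)` is a (non-commutative) algebra: the
convolution of two weighted-`L²` kernels is again in weighted `L²`. -/
theorem sobolev_dual_algebra {G : Type*} [Group G] [MeasurableSpace G]
    [MeasurableMul₂ G] [MeasurableInv G]
    (μ : Measure G) [SigmaFinite μ] [μ.IsMulLeftInvariant] [μ.IsMulRightInvariant]
    (qn : G → ℝ) (hqn_meas : Measurable qn) (hqn_nonneg : ∀ x, 0 ≤ qn x)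
    (c : ℝ) (hc : 1 ≤ c) (htri : ∀ x y, qn (x * y) ≤ c * (qn x + qn y))
    (s : ℝ) (hs : 0 ≤ s) :
    ∃ C > 0, ∀ f g : G → ℂ, Measurable f → Measurable g →
      (eLpNorm (fun x => ((1 + qn x) ^ s : ℝ) * ∫ y, g y * f (y⁻¹ * x) ∂μ) 2 μ
        ≤ ENNReal.ofReal C *
          (eLpNorm (fun x => ((1 + qn x) ^ s : ℝ) * f x) 2 μ * eLpNorm g 1 μ +
            eLpNorm f 1 μ * eLpNorm (fun x => ((1 + qn x) ^ s : ℝ) * g x) 2 μ)) ∧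
      (∀ Q : ℝ, Q / 2 < s →
        (∀ t : ℝ, Q / 2 < t → Integrable (fun x => (1 + qn x) ^ (-(2 * t))) μ) →
        MemLp (fun x => ((1 + qn x) ^ s : ℝ) * f x) 2 μ →
        MemLp (fun x => ((1 + qn x) ^ s : ℝ) * g x) 2 μ →
        MemLp (fun x => ((1 + qn x) ^ s : ℝ) * ∫ y, g y * f (y⁻¹ * x) ∂μ) 2 μ) := by
  have hωpos : ∀ x : G, (0:ℝ) < (1 + qn x) ^ s :=
    fun x => Real.rpow_pos_of_pos (by linarith [hqn_nonneg x]) s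
  set W : G → ℝ≥0∞ := fun x => ENNReal.ofReal ((1 + qn x) ^ s) with hWdef
  have hWmeas : Measurable W := ((measurable_const.add hqn_meas).pow_const s).ennreal_ofReal
  have hW0 : ∀ x, W x ≠ 0 := fun x => (ENNReal.ofReal_pos.mpr (hωpos x)).ne'
  have hWtop : ∀ x, W x ≠ ∞ := fun _ => ENNReal.ofReal_ne_top
  set K : ℝ≥0∞ := ENNReal.ofReal ((2 * c) ^ s) with hKdef
  have hKtop : K ≠ ∞ := ENNReal.ofReal_ne_top
  -- Peetre-type inequality
  have peetre : ∀ x y : G, W x ≤ K * (W y + W (y⁻¹ * x)) := by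
    intro x y
    have hb1 : (0:ℝ) < 1 + qn y := by linarith [hqn_nonneg y]
    have hb2 : (0:ℝ) < 1 + qn (y⁻¹ * x) := by linarith [hqn_nonneg (y⁻¹ * x)]
    set M := max (1 + qn y) (1 + qn (y⁻¹ * x)) with hM
    have hMpos : 0 < M := lt_of_lt_of_le hb1 (le_max_left _ _)
    have h0 := htri y (y⁻¹ * x)
    rw [mul_inv_cancel_left] at h0
    have h1 : 1 + qn x ≤ 2 * c * M := by
      have l1 : 1 + qn y ≤ M := le_max_left _ _
      have l2 : 1 + qn (y⁻¹ * x) ≤ M := le_max_right _ _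
      nlinarith [hqn_nonneg x]
    have h2 : (1 + qn x) ^ s ≤ (2 * c) ^ s * M ^ s := by
      rw [← Real.mul_rpow (by linarith) hMpos.le]
      exact Real.rpow_le_rpow (by linarith [hqn_nonneg x]) h1 hs
    have h3 : M ^ s ≤ (1 + qn y) ^ s + (1 + qn (y⁻¹ * x)) ^ s := by
      rcases max_cases (1 + qn y) (1 + qn (y⁻¹ * x)) with ⟨hm, _⟩ | ⟨hm, _⟩ <;> rw [hM, hm]
      · exact le_add_of_nonneg_right (Real.rpow_nonneg hb2.le s)
      · exact le_add_of_nonneg_left (Real.rpow_nonneg hb1.le s)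
    calc W x ≤ ENNReal.ofReal ((2 * c) ^ s * ((1 + qn y) ^ s + (1 + qn (y⁻¹ * x)) ^ s)) := by
          apply ENNReal.ofReal_le_ofReal
          have h4 : (0:ℝ) ≤ (2 * c) ^ s := Real.rpow_nonneg (by linarith) s
          nlinarith [h2, h3]
      _ = K * (W y + W (y⁻¹ * x)) := by
          rw [ENNReal.ofReal_mul (Real.rpow_nonneg (by linarith) s),
            ENNReal.ofReal_add (Real.rpow_nonneg hb1.le s) (Real.rpow_nonneg hb2.le s)]
  -- translation of `eLpNorm`s into lintegrals
  have e2 : ∀ h : G → ℂ, eLpNorm h 2 μ = (∫⁻ x, (‖h x‖₊ : ℝ≥0∞) ^ (2:ℝ) ∂μ) ^ (1/2:ℝ) := by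
    intro h
    rw [eLpNorm_eq_lintegral_rpow_enorm_toReal (by norm_num) (by norm_num)]
    norm_num
    rfl
  have enormw : ∀ (x : G) (z : ℂ),
      (‖(((1 + qn x) ^ s : ℝ) : ℂ) * z‖₊ : ℝ≥0∞) = W x * (‖z‖₊ : ℝ≥0∞) := by
    intro x z
    rw [nnnorm_mul, ENNReal.coe_mul, Complex.nnnorm_real]
    congr 1
    exact Real.enorm_eq_ofReal (hωpos x).le
  have e2w : ∀ h : G → ℂ, eLpNorm (fun x => ((1 + qn x) ^ s : ℝ) * h x) 2 μ
      = (∫⁻ x, (W x * (‖h x‖₊ : ℝ≥0∞)) ^ (2:ℝ) ∂μ) ^ (1/2:ℝ) := by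
    intro h
    rw [e2]
    congr 1
    exact lintegral_congr fun x => by rw [enormw x (h x)]
  refine ⟨(2 * c) ^ s, Real.rpow_pos_of_pos (by linarith) s, ?_⟩
  intro f g hf hg
  -- the main convolution estimate
  have main : eLpNorm (fun x => ((1 + qn x) ^ s : ℝ) * ∫ y, g y * f (y⁻¹ * x) ∂μ) 2 μ
      ≤ ENNReal.ofReal ((2 * c) ^ s) *
        (eLpNorm (fun x => ((1 + qn x) ^ s : ℝ) * f x) 2 μ * eLpNorm g 1 μ +
          eLpNorm f 1 μ * eLpNorm (fun x => ((1 + qn x) ^ s : ℝ) * g x) 2 μ) := by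
    have mt1 : ∀ x, Measurable fun y => (W y * (‖g y‖₊ : ℝ≥0∞)) * (‖f (y⁻¹ * x)‖₊ : ℝ≥0∞) :=
      fun x => (hWmeas.mul hg.enorm).mul (hf.comp (measurable_inv.mul_const x)).enorm
    have mt2 : ∀ x, Measurable fun y =>
        (‖g y‖₊ : ℝ≥0∞) * (W (y⁻¹ * x) * (‖f (y⁻¹ * x)‖₊ : ℝ≥0∞)) :=
      fun x => hg.enorm.mul ((hWmeas.comp (measurable_inv.mul_const x)).mul
        (hf.comp (measurable_inv.mul_const x)).enorm)
    have mC1 : Measurable fun x => ∫⁻ y, (W y * (‖g y‖₊ : ℝ≥0∞)) * (‖f (y⁻¹ * x)‖₊ : ℝ≥0∞) ∂μ :=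
      Measurable.lintegral_prod_right'
        (f := fun p : G × G => (W p.2 * (‖g p.2‖₊ : ℝ≥0∞)) * (‖f (p.2⁻¹ * p.1)‖₊ : ℝ≥0∞))
        (((hWmeas.comp measurable_snd).mul (hg.comp measurable_snd).enorm).mul
          (hf.comp (measurable_snd.inv.mul measurable_fst)).enorm)
    have mC2 : Measurable fun x =>
        ∫⁻ y, (‖g y‖₊ : ℝ≥0∞) * (W (y⁻¹ * x) * (‖f (y⁻¹ * x)‖₊ : ℝ≥0∞)) ∂μ :=
      Measurable.lintegral_prod_right'
        (f := fun p : G × G => (‖g p.2‖₊ : ℝ≥0∞) *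
          (W (p.2⁻¹ * p.1) * (‖f (p.2⁻¹ * p.1)‖₊ : ℝ≥0∞)))
        ((hg.comp measurable_snd).enorm.mul
          (((hWmeas.comp (measurable_snd.inv.mul measurable_fst))).mul
            (hf.comp (measurable_snd.inv.mul measurable_fst)).enorm))
    have hpoint : ∀ x, W x * (‖∫ y, g y * f (y⁻¹ * x) ∂μ‖₊ : ℝ≥0∞)
        ≤ K * ((∫⁻ y, (W y * (‖g y‖₊ : ℝ≥0∞)) * (‖f (y⁻¹ * x)‖₊ : ℝ≥0∞) ∂μ)
          + ∫⁻ y, (‖g y‖₊ : ℝ≥0∞) * (W (y⁻¹ * x) * (‖f (y⁻¹ * x)‖₊ : ℝ≥0∞)) ∂μ) := by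
      intro x
      have mint : Measurable fun y => (‖g y‖₊ : ℝ≥0∞) * (‖f (y⁻¹ * x)‖₊ : ℝ≥0∞) :=
        hg.enorm.mul (hf.comp (measurable_inv.mul_const x)).enorm
      have hIb : (‖∫ y, g y * f (y⁻¹ * x) ∂μ‖₊ : ℝ≥0∞)
          ≤ ∫⁻ y, (‖g y‖₊ : ℝ≥0∞) * (‖f (y⁻¹ * x)‖₊ : ℝ≥0∞) ∂μ := by
        refine le_trans (enorm_integral_le_lintegral_enorm _) ?_
        refine le_of_eq (lintegral_congr fun y => ?_)
        show (‖g y * f (y⁻¹ * x)‖₊ : ℝ≥0∞) = _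
        rw [nnnorm_mul, ENNReal.coe_mul]
      calc W x * (‖∫ y, g y * f (y⁻¹ * x) ∂μ‖₊ : ℝ≥0∞)
          ≤ W x * ∫⁻ y, (‖g y‖₊ : ℝ≥0∞) * (‖f (y⁻¹ * x)‖₊ : ℝ≥0∞) ∂μ :=
            mul_le_mul_right hIb _
        _ = ∫⁻ y, W x * ((‖g y‖₊ : ℝ≥0∞) * (‖f (y⁻¹ * x)‖₊ : ℝ≥0∞)) ∂μ :=
            (lintegral_const_mul _ mint).symm
        _ ≤ ∫⁻ y, (K * (W y + W (y⁻¹ * x))) *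
              ((‖g y‖₊ : ℝ≥0∞) * (‖f (y⁻¹ * x)‖₊ : ℝ≥0∞)) ∂μ :=
            lintegral_mono fun y => mul_le_mul_left (peetre x y) _
        _ = K * ((∫⁻ y, (W y * (‖g y‖₊ : ℝ≥0∞)) * (‖f (y⁻¹ * x)‖₊ : ℝ≥0∞) ∂μ)
            + ∫⁻ y, (‖g y‖₊ : ℝ≥0∞) * (W (y⁻¹ * x) * (‖f (y⁻¹ * x)‖₊ : ℝ≥0∞)) ∂μ) := by
            have hre : ∀ y, (K * (W y + W (y⁻¹ * x))) *
                ((‖g y‖₊ : ℝ≥0∞) * (‖f (y⁻¹ * x)‖₊ : ℝ≥0∞))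
                = K * ((W y * (‖g y‖₊ : ℝ≥0∞)) * (‖f (y⁻¹ * x)‖₊ : ℝ≥0∞)
                  + (‖g y‖₊ : ℝ≥0∞) * (W (y⁻¹ * x) * (‖f (y⁻¹ * x)‖₊ : ℝ≥0∞))) := fun y => by
              ring
            rw [lintegral_congr hre, lintegral_const_mul K (by exact (mt1 x).add (mt2 x) : Measurable fun y =>
              (W y * (‖g y‖₊ : ℝ≥0∞)) * (‖f (y⁻¹ * x)‖₊ : ℝ≥0∞)
                + (‖g y‖₊ : ℝ≥0∞) * (W (y⁻¹ * x) * (‖f (y⁻¹ * x)‖₊ : ℝ≥0∞)))]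
            congr 1
            exact lintegral_add_left (mt1 x) _
    calc eLpNorm (fun x => ((1 + qn x) ^ s : ℝ) * ∫ y, g y * f (y⁻¹ * x) ∂μ) 2 μ
        = (∫⁻ x, (W x * (‖∫ y, g y * f (y⁻¹ * x) ∂μ‖₊ : ℝ≥0∞)) ^ (2:ℝ) ∂μ) ^ (1/2:ℝ) :=
          e2w _
      _ ≤ (∫⁻ x, (K * ((∫⁻ y, (W y * (‖g y‖₊ : ℝ≥0∞)) * (‖f (y⁻¹ * x)‖₊ : ℝ≥0∞) ∂μ)
            + ∫⁻ y, (‖g y‖₊ : ℝ≥0∞) * (W (y⁻¹ * x) * (‖f (y⁻¹ * x)‖₊ : ℝ≥0∞)) ∂μ)) ^ (2:ℝ) ∂μ)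
            ^ (1/2:ℝ) :=
          ENNReal.rpow_le_rpow (lintegral_mono fun x =>
            ENNReal.rpow_le_rpow (hpoint x) (by norm_num)) (by norm_num)
      _ = K * (∫⁻ x, ((∫⁻ y, (W y * (‖g y‖₊ : ℝ≥0∞)) * (‖f (y⁻¹ * x)‖₊ : ℝ≥0∞) ∂μ)
            + ∫⁻ y, (‖g y‖₊ : ℝ≥0∞) * (W (y⁻¹ * x) * (‖f (y⁻¹ * x)‖₊ : ℝ≥0∞)) ∂μ) ^ (2:ℝ) ∂μ)
            ^ (1/2:ℝ) := by
          rw [lintegral_congr fun x => ENNReal.mul_rpow_of_nonneg K _ (by norm_num : (0:ℝ) ≤ 2),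
            lintegral_const_mul' _ _ (ENNReal.rpow_ne_top_of_nonneg (by norm_num) hKtop),
            ENNReal.mul_rpow_of_nonneg _ _ (by norm_num : (0:ℝ) ≤ 1/2), sda_sq_half]
      _ ≤ K * ((∫⁻ x, (∫⁻ y, (W y * (‖g y‖₊ : ℝ≥0∞)) * (‖f (y⁻¹ * x)‖₊ : ℝ≥0∞) ∂μ) ^ (2:ℝ) ∂μ)
              ^ (1/2:ℝ)
            + (∫⁻ x, (∫⁻ y, (‖g y‖₊ : ℝ≥0∞) * (W (y⁻¹ * x) * (‖f (y⁻¹ * x)‖₊ : ℝ≥0∞)) ∂μ)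
              ^ (2:ℝ) ∂μ) ^ (1/2:ℝ)) := by
          refine mul_le_mul_right ?_ K
          have hmink := ENNReal.lintegral_Lp_add_le (μ := μ) (p := 2)
            mC1.aemeasurable mC2.aemeasurable one_le_two
          simpa [Pi.add_apply] using hmink
      _ ≤ K * (((∫⁻ x, (W x * (‖g x‖₊ : ℝ≥0∞)) ^ (2:ℝ) ∂μ) ^ (1/2:ℝ)
              * ∫⁻ y, (‖f y‖₊ : ℝ≥0∞) ∂μ)
            + (∫⁻ y, (‖g y‖₊ : ℝ≥0∞) ∂μ)
              * (∫⁻ x, (W x * (‖f x‖₊ : ℝ≥0∞)) ^ (2:ℝ) ∂μ) ^ (1/2:ℝ)) := by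
          refine mul_le_mul_right (add_le_add ?_ ?_) K
          · exact sda_young_two (u := fun y => W y * (‖g y‖₊ : ℝ≥0∞))
              (v := fun y => (‖f y‖₊ : ℝ≥0∞)) (hWmeas.mul hg.enorm) hf.enorm
          · exact sda_young_one (u := fun y => (‖g y‖₊ : ℝ≥0∞))
              (v := fun y => W y * (‖f y‖₊ : ℝ≥0∞)) hg.enorm (hWmeas.mul hf.enorm)
      _ = ENNReal.ofReal ((2 * c) ^ s) *
            (eLpNorm (fun x => ((1 + qn x) ^ s : ℝ) * f x) 2 μ * eLpNorm g 1 μ +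
              eLpNorm f 1 μ * eLpNorm (fun x => ((1 + qn x) ^ s : ℝ) * g x) 2 μ) := by
          rw [e2w f, e2w g, eLpNorm_one_eq_lintegral_enorm, eLpNorm_one_eq_lintegral_enorm]
          simp only [enorm_eq_nnnorm]
          rw [hKdef]
          ring
  refine ⟨main, ?_⟩
  -- the algebra property
  intro Q hQs hint hf2 hg2
  have hVfin : ∫⁻ x, ENNReal.ofReal ((1 + qn x) ^ (-(2 * s))) ∂μ < ∞ := by
    have h := (hint s hQs).hasFiniteIntegral
    rw [HasFiniteIntegral] at h
    refine lt_of_eq_of_lt ?_ h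
    refine lintegral_congr fun x => ?_
    rw [Real.enorm_eq_ofReal (Real.rpow_nonneg (by linarith [hqn_nonneg x]) _)]
  have hWinv2 : ∀ x : G, ((W x)⁻¹) ^ (2:ℝ) = ENNReal.ofReal ((1 + qn x) ^ (-(2 * s))) := by
    intro x
    have hbase : (0:ℝ) ≤ 1 + qn x := by linarith [hqn_nonneg x]
    have e : ((((1 + qn x) ^ s : ℝ))⁻¹) ^ (2:ℝ) = (1 + qn x) ^ (-(2 * s)) := by
      rw [← Real.rpow_neg hbase s, ← Real.rpow_mul hbase]
      congr 1
      ring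
    calc ((W x)⁻¹) ^ (2:ℝ)
        = (ENNReal.ofReal (((1 + qn x) ^ s : ℝ)⁻¹)) ^ (2:ℝ) := by
          rw [ENNReal.ofReal_inv_of_pos (hωpos x)]
      _ = ENNReal.ofReal ((((1 + qn x) ^ s : ℝ)⁻¹) ^ (2:ℝ)) :=
          ENNReal.ofReal_rpow_of_nonneg (by positivity) (by norm_num)
      _ = ENNReal.ofReal ((1 + qn x) ^ (-(2 * s))) := by rw [e]
  have l1 : ∀ h : G → ℂ, Measurable h → eLpNorm h 1 μ
      ≤ eLpNorm (fun x => ((1 + qn x) ^ s : ℝ) * h x) 2 μ *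
        (∫⁻ x, ENNReal.ofReal ((1 + qn x) ^ (-(2 * s))) ∂μ) ^ (1/2:ℝ) := by
    intro h hh
    rw [eLpNorm_one_eq_lintegral_enorm, e2w h]
    calc ∫⁻ x, (‖h x‖₊ : ℝ≥0∞) ∂μ
        = ∫⁻ x, ((fun x => W x * (‖h x‖₊ : ℝ≥0∞)) * fun x => (W x)⁻¹) x ∂μ := by
          refine lintegral_congr fun x => ?_
          simp only [Pi.mul_apply]
          rw [mul_comm (W x) _, mul_assoc, ENNReal.mul_inv_cancel (hW0 x) (hWtop x), mul_one]
      _ ≤ (∫⁻ x, (W x * (‖h x‖₊ : ℝ≥0∞)) ^ (2:ℝ) ∂μ) ^ (1/(2:ℝ))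
          * (∫⁻ x, ((W x)⁻¹) ^ (2:ℝ) ∂μ) ^ (1/(2:ℝ)) :=
          ENNReal.lintegral_mul_le_Lp_mul_Lq μ sda_conj22
            (hWmeas.mul hh.enorm).aemeasurable hWmeas.inv.aemeasurable
      _ = (∫⁻ x, (W x * (‖h x‖₊ : ℝ≥0∞)) ^ (2:ℝ) ∂μ) ^ (1/2:ℝ)
          * (∫⁻ x, ENNReal.ofReal ((1 + qn x) ^ (-(2 * s))) ∂μ) ^ (1/2:ℝ) := by
          rw [lintegral_congr hWinv2]
  have hf1 : eLpNorm f 1 μ < ∞ :=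
    lt_of_le_of_lt (l1 f hf) (ENNReal.mul_lt_top hf2.2
      (ENNReal.rpow_lt_top_of_nonneg (by norm_num) hVfin.ne))
  have hg1 : eLpNorm g 1 μ < ∞ :=
    lt_of_le_of_lt (l1 g hg) (ENNReal.mul_lt_top hg2.2
      (ENNReal.rpow_lt_top_of_nonneg (by norm_num) hVfin.ne))
  constructor
  · have hFprod : Measurable fun p : G × G => g p.2 * f (p.2⁻¹ * p.1) :=
      (hg.comp measurable_snd).mul (hf.comp (measurable_snd.inv.mul measurable_fst))
    have hIm : StronglyMeasurable fun x => ∫ y, g y * f (y⁻¹ * x) ∂μ :=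
      hFprod.stronglyMeasurable.integral_prod_right'
    exact ((Complex.measurable_ofReal.comp
      ((measurable_const.add hqn_meas).pow_const s)).stronglyMeasurable.mul hIm).aestronglyMeasurable
  · refine lt_of_le_of_lt main ?_
    refine ENNReal.mul_lt_top ENNReal.ofReal_lt_top ?_
    exact ENNReal.add_lt_top.mpr
      ⟨ENNReal.mul_lt_top hf2.2 hg1, ENNReal.mul_lt_top hf1 hg2.2⟩
end

section
/- Dyadic kernel summation estimate: let Q > 0, s > Q/2, ε = (s + Q/2)/2, and let (κ_j)_{j∈ℤ} be measurable functions on a graded Lie group G of homogeneous dimension Q with sup_j ‖(1+|·|)^s κ_j‖_{L²(G)} =: M < ∞. Then for every m ∈ ℤ, Σ_{j∈ℤ} ∫_{2^m ≤ |x| ≤ 2^{m+1}} |2^{−Qj} κ_j(2^{−j}·x)| dx ≤ C·M with C independent of m and (κ_j). In particular, the sum Σ_j 2^{−Qj}κ_j(2^{−j}·) converges absolutely in L¹_loc(G∖{0}). -/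
open MeasureTheory ENNReal

/-- Dyadic kernel summation estimate on a graded Lie group `G` of
homogeneous dimension `Q` with dilations `D_r` (Haar measure scaling `d(D_r x) = r^Q dx`)
and homogeneous quasi-norm `qn`: let `s > Q/2`, `ε = (s+Q/2)/2`, and let `(κ_j)_{j∈ℤ}`
be measurable with `sup_j ‖(1+|·|)^s κ_j‖_{L²} ≤ M`. Then for every `m ∈ ℤ`,
`∑_{j∈ℤ} ∫_{2^m ≤ |x| ≤ 2^{m+1}} |2^{−Qj} κ_j(D_{2^{−j}} x)| dx ≤ C·M`
with `C` independent of `m` and of `(κ_j)`; in particular `∑_j 2^{−Qj}κ_j(2^{−j}·)`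
converges absolutely in `L¹_loc(G∖{0})`. -/
theorem dyadic_kernel_summation {G : Type*} [MeasurableSpace G]
    (μ : Measure G) (Q : ℝ) (hQ : 0 < Q)
    (D : ℝ → G → G) (hDmeas : ∀ r, Measurable (D r))
    (hDscale : ∀ r : ℝ, 0 < r → ∀ f : G → ℝ≥0∞, Measurable f →
      ∫⁻ x, f (D r x) ∂μ = ENNReal.ofReal (r ^ (-Q)) * ∫⁻ x, f x ∂μ)
    (qn : G → ℝ) (hqn_meas : Measurable qn) (hqn_nonneg : ∀ x, 0 ≤ qn x)
    (hhom : ∀ r : ℝ, 0 < r → ∀ x, qn (D r x) = r * qn x)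
    (hpolar : ∀ t : ℝ, Q / 2 < t → Integrable (fun x => (1 + qn x) ^ (-(2 * t))) μ)
    (s : ℝ) (hs : Q / 2 < s) :
    ∃ C > 0, ∀ κ : ℤ → G → ℂ, (∀ j, Measurable (κ j)) →
      ∀ M : ℝ, 0 ≤ M →
      (∀ j : ℤ, eLpNorm (fun x => ((1 + qn x) ^ s : ℝ) * κ j x) 2 μ ≤ ENNReal.ofReal M) →
      ∀ m : ℤ,
        ∑' j : ℤ,
          ∫⁻ x in {x : G | (2 : ℝ) ^ (m : ℝ) ≤ qn x ∧ qn x ≤ (2 : ℝ) ^ ((m : ℝ) + 1)},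
            (‖((2 : ℝ) ^ (-Q * (j : ℝ)) : ℝ) * κ j (D ((2 : ℝ) ^ (-(j : ℝ))) x)‖₊ : ℝ≥0∞) ∂μ
          ≤ ENNReal.ofReal (C * M) := by
  classical
  have h2 : (0:ℝ) < 2 := two_pos
  have h1qn : ∀ x, (0:ℝ) < 1 + qn x := fun x => by linarith [hqn_nonneg x]
  set t : ℝ := (s + Q / 2) / 2 with ht_def
  have htQ : Q / 2 < t := by rw [ht_def]; linarith
  set δ : ℝ := s - Q / 2 with hδ_def
  have hδ : 0 < δ := by rw [hδ_def]; linarith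
  -- the dyadic annuli
  set A : ℤ → Set G := fun k => {y : G | (2:ℝ) ^ (k:ℝ) ≤ qn y ∧ qn y ≤ (2:ℝ) ^ ((k:ℝ) + 1)}
    with hA_def
  have hAmeas : ∀ k, MeasurableSet (A k) := by
    intro k
    rw [hA_def]
    exact (measurableSet_le measurable_const hqn_meas).inter
      (measurableSet_le hqn_meas measurable_const)
  -- membership under dilation
  have hmem : ∀ (k l : ℤ) (x : G),
      (D ((2:ℝ) ^ (-(l:ℝ))) x ∈ A (k - l)) ↔ x ∈ A k := by
    intro k l x
    have hr : (0:ℝ) < (2:ℝ) ^ (-(l:ℝ)) := Real.rpow_pos_of_pos h2 _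
    have hq : qn (D ((2:ℝ) ^ (-(l:ℝ))) x) = (2:ℝ) ^ (-(l:ℝ)) * qn x := hhom _ hr x
    have e1 : (2:ℝ) ^ (((k - l : ℤ)):ℝ) = (2:ℝ) ^ (-(l:ℝ)) * (2:ℝ) ^ ((k:ℝ)) := by
      rw [← Real.rpow_add h2]; congr 1; push_cast; ring
    have e2 : (2:ℝ) ^ ((((k - l : ℤ)):ℝ) + 1) = (2:ℝ) ^ (-(l:ℝ)) * (2:ℝ) ^ ((k:ℝ) + 1) := by
      rw [← Real.rpow_add h2]; congr 1; push_cast; ring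
    simp only [hA_def, Set.mem_setOf_eq, hq, e1, e2, mul_le_mul_iff_right₀ hr]
  -- finiteness of the weight integrals
  have hIfin : ∀ u : ℝ, Q / 2 < u →
      (∫⁻ x, ENNReal.ofReal ((1 + qn x) ^ (-(2 * u))) ∂μ) ≠ ⊤ := by
    intro u hu
    have h := (hpolar u hu).hasFiniteIntegral
    rw [hasFiniteIntegral_iff_ofReal (Filter.Eventually.of_forall fun x =>
      Real.rpow_nonneg (h1qn x).le _)] at h
    exact h.ne
  set It := ∫⁻ x, ENNReal.ofReal ((1 + qn x) ^ (-(2 * t))) ∂μ with hIt_def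
  have hItfin : It ≠ ⊤ := hIfin t htQ
  set W : ℤ → ℝ≥0∞ :=
    fun k => ∫⁻ y in A k, ENNReal.ofReal ((1 + qn y) ^ (-(2 * s))) ∂μ with hW_def
  -- first bound on W
  have hW1 : ∀ k : ℤ, W k ≤ ENNReal.ofReal ((2:ℝ) ^ (-δ * (k:ℝ))) * It := by
    intro k
    have hpt : ∀ y ∈ A k, ENNReal.ofReal ((1 + qn y) ^ (-(2 * s))) ≤
        ENNReal.ofReal ((2:ℝ) ^ (-δ * (k:ℝ)) * (1 + qn y) ^ (-(2 * t))) := by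
      intro y hy
      apply ENNReal.ofReal_le_ofReal
      have hky : (2:ℝ) ^ (k:ℝ) ≤ 1 + qn y := le_trans hy.1 (by linarith)
      calc (1 + qn y) ^ (-(2 * s))
          = (1 + qn y) ^ (-δ) * (1 + qn y) ^ (-(2 * t)) := by
            rw [← Real.rpow_add (h1qn y)]; congr 1; rw [hδ_def, ht_def]; ring
        _ ≤ ((2:ℝ) ^ (k:ℝ)) ^ (-δ) * (1 + qn y) ^ (-(2 * t)) :=
            mul_le_mul_of_nonneg_right
              (Real.rpow_le_rpow_of_nonpos (Real.rpow_pos_of_pos h2 _) hky (by linarith))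
              (Real.rpow_nonneg (h1qn y).le _)
        _ = (2:ℝ) ^ (-δ * (k:ℝ)) * (1 + qn y) ^ (-(2 * t)) := by
            rw [← Real.rpow_mul h2.le]
            congr 1
            ring
    calc W k ≤ ∫⁻ y in A k,
          ENNReal.ofReal ((2:ℝ) ^ (-δ * (k:ℝ)) * (1 + qn y) ^ (-(2 * t))) ∂μ := by
          rw [hW_def]; exact setLIntegral_mono' (hAmeas k) hpt
      _ = ∫⁻ y in A k, ENNReal.ofReal ((2:ℝ) ^ (-δ * (k:ℝ))) *
            ENNReal.ofReal ((1 + qn y) ^ (-(2 * t))) ∂μ := by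
          simp_rw [ENNReal.ofReal_mul (Real.rpow_nonneg h2.le _)]
      _ = ENNReal.ofReal ((2:ℝ) ^ (-δ * (k:ℝ))) *
            ∫⁻ y in A k, ENNReal.ofReal ((1 + qn y) ^ (-(2 * t))) ∂μ :=
          lintegral_const_mul' _ _ ENNReal.ofReal_ne_top
      _ ≤ ENNReal.ofReal ((2:ℝ) ^ (-δ * (k:ℝ))) * It := by
          rw [hIt_def]
          exact mul_le_mul_right (setLIntegral_le_lintegral _ _) _
  -- second bound on W via scaling of annuli measures
  have hW2 : ∀ k : ℤ, W k ≤ ENNReal.ofReal ((2:ℝ) ^ (Q * (k:ℝ))) * μ (A 0) := by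
    intro k
    have h1 : W k ≤ μ (A k) := by
      calc W k ≤ ∫⁻ _ in A k, 1 ∂μ := by
            rw [hW_def]
            refine setLIntegral_mono' (hAmeas k) (fun y _ => ?_)
            rw [← ENNReal.ofReal_one]
            exact ENNReal.ofReal_le_ofReal
              (Real.rpow_le_one_of_one_le_of_nonpos (by linarith [hqn_nonneg y]) (by linarith))
        _ = μ (A k) := setLIntegral_one _
    have h2' : μ (A k) = ENNReal.ofReal ((2:ℝ) ^ (Q * (k:ℝ))) * μ (A 0) := by
      have hr : (0:ℝ) < (2:ℝ) ^ (-(k:ℝ)) := Real.rpow_pos_of_pos h2 _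
      have hgm : Measurable ((A 0).indicator (1 : G → ℝ≥0∞)) :=
        measurable_one.indicator (hAmeas 0)
      have hsc := hDscale _ hr _ hgm
      have hpt : ∀ x, (A 0).indicator (1 : G → ℝ≥0∞) (D ((2:ℝ) ^ (-(k:ℝ))) x)
          = (A k).indicator (1 : G → ℝ≥0∞) x := by
        intro x
        have hmm : D ((2:ℝ) ^ (-(k:ℝ))) x ∈ A (k - k) ↔ x ∈ A k := hmem k k x
        rw [sub_self] at hmm
        simp [Set.indicator_apply, hmm]
      rw [lintegral_congr hpt, lintegral_indicator_one (hAmeas k),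
        lintegral_indicator_one (hAmeas 0)] at hsc
      rw [hsc]
      congr 2
      rw [← Real.rpow_mul h2.le]
      congr 1
      ring
    exact h1.trans (le_of_eq h2')
  -- μ (A 0) is finite
  have hμA0 : μ (A 0) ≠ ⊤ := by
    have hIs := hIfin s hs
    have hpt : ∀ y ∈ A 0, ENNReal.ofReal ((3:ℝ) ^ (-(2 * s))) ≤
        ENNReal.ofReal ((1 + qn y) ^ (-(2 * s))) := by
      intro y hy
      apply ENNReal.ofReal_le_ofReal
      refine Real.rpow_le_rpow_of_nonpos (h1qn y) ?_ (by linarith)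
      have h2' : qn y ≤ (2:ℝ) ^ (((0:ℤ):ℝ) + 1) := hy.2
      have h01 : ((0:ℤ):ℝ) + 1 = 1 := by norm_num
      rw [h01, Real.rpow_one] at h2'
      linarith
    have hle : ENNReal.ofReal ((3:ℝ) ^ (-(2 * s))) * μ (A 0)
        ≤ ∫⁻ y, ENNReal.ofReal ((1 + qn y) ^ (-(2 * s))) ∂μ := by
      calc ENNReal.ofReal ((3:ℝ) ^ (-(2 * s))) * μ (A 0)
          = ∫⁻ _ in A 0, ENNReal.ofReal ((3:ℝ) ^ (-(2 * s))) ∂μ :=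
            (setLIntegral_const _ _).symm
        _ ≤ ∫⁻ y in A 0, ENNReal.ofReal ((1 + qn y) ^ (-(2 * s))) ∂μ :=
            setLIntegral_mono' (hAmeas 0) hpt
        _ ≤ _ := setLIntegral_le_lintegral _ _
    intro htop
    rw [htop, ENNReal.mul_top
      (ENNReal.ofReal_pos.mpr (Real.rpow_pos_of_pos (by norm_num) _)).ne'] at hle
    exact hIs (top_le_iff.mp hle)
  -- configure the geometric series
  set b : ℤ → ℝ≥0∞ := fun k => W k ^ (1/2 : ℝ) with hb_def
  set q1 : ℝ≥0∞ := ENNReal.ofReal ((2:ℝ) ^ (-δ / 2)) with hq1_def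
  set q2 : ℝ≥0∞ := ENNReal.ofReal ((2:ℝ) ^ (-Q / 2)) with hq2_def
  have hq1lt : q1 < 1 := by
    rw [hq1_def]
    exact ENNReal.ofReal_lt_one.mpr
      (Real.rpow_lt_one_of_one_lt_of_neg one_lt_two (by linarith))
  have hq2lt : q2 < 1 := by
    rw [hq2_def]
    exact ENNReal.ofReal_lt_one.mpr
      (Real.rpow_lt_one_of_one_lt_of_neg one_lt_two (by linarith))
  have hb1 : ∀ n : ℕ, b (n : ℤ) ≤ It ^ (1/2:ℝ) * q1 ^ n := by
    intro n
    have h := hW1 (n : ℤ)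
    have hb : b (n : ℤ) ≤ (ENNReal.ofReal ((2:ℝ) ^ (-δ * ((n:ℤ):ℝ))) * It) ^ (1/2:ℝ) := by
      rw [hb_def]
      exact ENNReal.rpow_le_rpow h (by norm_num)
    refine hb.trans ?_
    rw [ENNReal.mul_rpow_of_nonneg _ _ (by norm_num : (0:ℝ) ≤ 1/2), mul_comm]
    have he : (ENNReal.ofReal ((2:ℝ) ^ (-δ * ((n:ℤ):ℝ)))) ^ (1/2:ℝ) = q1 ^ n := by
      rw [ENNReal.ofReal_rpow_of_pos (Real.rpow_pos_of_pos h2 _), hq1_def,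
        ← ENNReal.ofReal_pow (Real.rpow_nonneg h2.le _)]
      congr 1
      rw [← Real.rpow_natCast ((2:ℝ) ^ (-δ / 2)) n, ← Real.rpow_mul h2.le,
        ← Real.rpow_mul h2.le]
      congr 1
      push_cast
      ring
    rw [he]
  have hb2 : ∀ n : ℕ, b (-(n + 1)) ≤ μ (A 0) ^ (1/2:ℝ) * q2 ^ n := by
    intro n
    have h := hW2 (-(n + 1) : ℤ)
    have hb : b (-(n + 1)) ≤
        (ENNReal.ofReal ((2:ℝ) ^ (Q * ((-(n + 1) : ℤ):ℝ))) * μ (A 0)) ^ (1/2:ℝ) := by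
      rw [hb_def]
      exact ENNReal.rpow_le_rpow h (by norm_num)
    refine hb.trans ?_
    rw [ENNReal.mul_rpow_of_nonneg _ _ (by norm_num : (0:ℝ) ≤ 1/2), mul_comm]
    have he : (ENNReal.ofReal ((2:ℝ) ^ (Q * ((-(n + 1) : ℤ):ℝ)))) ^ (1/2:ℝ) = q2 ^ (n + 1) := by
      rw [ENNReal.ofReal_rpow_of_pos (Real.rpow_pos_of_pos h2 _), hq2_def,
        ← ENNReal.ofReal_pow (Real.rpow_nonneg h2.le _)]
      congr 1
      rw [← Real.rpow_natCast ((2:ℝ) ^ (-Q / 2)) (n + 1), ← Real.rpow_mul h2.le,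
        ← Real.rpow_mul h2.le]
      congr 1
      push_cast
      ring
    rw [he]
    refine mul_le_mul_right ?_ _
    calc q2 ^ (n + 1) = q2 ^ n * q2 := pow_succ _ _
      _ ≤ q2 ^ n * 1 := mul_le_mul_right hq2lt.le _
      _ = q2 ^ n := mul_one _
  have hS1 : (∑' n : ℕ, b (n : ℤ)) ≠ ⊤ := by
    have hle : (∑' n : ℕ, b (n : ℤ)) ≤ ∑' n : ℕ, It ^ (1/2:ℝ) * q1 ^ n :=
      ENNReal.tsum_le_tsum hb1
    rw [ENNReal.tsum_mul_left, ENNReal.tsum_geometric] at hle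
    refine ne_top_of_le_ne_top ?_ hle
    refine ENNReal.mul_ne_top (ENNReal.rpow_ne_top_of_nonneg (by norm_num) hItfin) ?_
    rw [Ne, ENNReal.inv_eq_top, tsub_eq_zero_iff_le]
    exact not_le.mpr hq1lt
  have hS2 : (∑' n : ℕ, b (-(n + 1))) ≠ ⊤ := by
    have hle : (∑' n : ℕ, b (-(n + 1))) ≤ ∑' n : ℕ, μ (A 0) ^ (1/2:ℝ) * q2 ^ n :=
      ENNReal.tsum_le_tsum hb2
    rw [ENNReal.tsum_mul_left, ENNReal.tsum_geometric] at hle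
    refine ne_top_of_le_ne_top ?_ hle
    refine ENNReal.mul_ne_top (ENNReal.rpow_ne_top_of_nonneg (by norm_num) hμA0) ?_
    rw [Ne, ENNReal.inv_eq_top, tsub_eq_zero_iff_le]
    exact not_le.mpr hq2lt
  set S : ℝ≥0∞ := ∑' k : ℤ, b k with hS_def
  have hSsplit : S = (∑' n : ℕ, b (n : ℤ)) + ∑' n : ℕ, b (-(n + 1)) :=
    (HasSum.of_nat_of_neg_add_one ENNReal.summable.hasSum ENNReal.summable.hasSum).tsum_eq
  have hSfin : S ≠ ⊤ := by
    rw [hSsplit]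
    exact ENNReal.add_ne_top.mpr ⟨hS1, hS2⟩
  -- the constant
  refine ⟨S.toReal + 1, by positivity, ?_⟩
  intro κ hκmeas M hM hMb m
  -- change of variables in each dyadic piece
  have hchange : ∀ j : ℤ,
      (∫⁻ x in {x : G | (2 : ℝ) ^ (m : ℝ) ≤ qn x ∧ qn x ≤ (2 : ℝ) ^ ((m : ℝ) + 1)},
        (‖((2 : ℝ) ^ (-Q * (j : ℝ)) : ℝ) * κ j (D ((2 : ℝ) ^ (-(j : ℝ))) x)‖₊ : ℝ≥0∞) ∂μ)
      = ∫⁻ y in A (m - j), (‖κ j y‖₊ : ℝ≥0∞) ∂μ := by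
    intro j
    have hr : (0:ℝ) < (2:ℝ) ^ (-(j:ℝ)) := Real.rpow_pos_of_pos h2 _
    have hgm : Measurable ((A (m - j)).indicator fun y => (‖κ j y‖₊ : ℝ≥0∞)) :=
      ((hκmeas j).enorm).indicator (hAmeas (m - j))
    have hAm : {x : G | (2:ℝ) ^ (m:ℝ) ≤ qn x ∧ qn x ≤ (2:ℝ) ^ ((m:ℝ) + 1)} = A m := by
      rw [hA_def]
    rw [hAm]
    calc ∫⁻ x in A m,
          (‖((2 : ℝ) ^ (-Q * (j : ℝ)) : ℝ) * κ j (D ((2 : ℝ) ^ (-(j : ℝ))) x)‖₊ : ℝ≥0∞) ∂μ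
        = ∫⁻ x in A m, ENNReal.ofReal ((2:ℝ) ^ (-Q * (j:ℝ))) *
            (‖κ j (D ((2:ℝ) ^ (-(j:ℝ))) x)‖₊ : ℝ≥0∞) ∂μ := by
          refine lintegral_congr fun x => ?_
          rw [nnnorm_mul, ENNReal.coe_mul, Complex.nnnorm_real,
            ← enorm_eq_nnnorm, Real.enorm_eq_ofReal (Real.rpow_nonneg h2.le _)]
      _ = ENNReal.ofReal ((2:ℝ) ^ (-Q * (j:ℝ))) *
            ∫⁻ x in A m, (‖κ j (D ((2:ℝ) ^ (-(j:ℝ))) x)‖₊ : ℝ≥0∞) ∂μ :=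
          lintegral_const_mul' _ _ ENNReal.ofReal_ne_top
      _ = ENNReal.ofReal ((2:ℝ) ^ (-Q * (j:ℝ))) *
            ∫⁻ x, (A (m - j)).indicator (fun y => (‖κ j y‖₊ : ℝ≥0∞))
              (D ((2:ℝ) ^ (-(j:ℝ))) x) ∂μ := by
          congr 1
          rw [← lintegral_indicator (hAmeas m)]
          refine lintegral_congr fun x => ?_
          have hmm := hmem m j x
          simp only [Set.indicator_apply, hmm]
      _ = ENNReal.ofReal ((2:ℝ) ^ (-Q * (j:ℝ))) * (ENNReal.ofReal (((2:ℝ) ^ (-(j:ℝ))) ^ (-Q)) *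
            ∫⁻ y, (A (m - j)).indicator (fun y => (‖κ j y‖₊ : ℝ≥0∞)) y ∂μ) := by
          rw [hDscale _ hr _ hgm]
      _ = ∫⁻ y in A (m - j), (‖κ j y‖₊ : ℝ≥0∞) ∂μ := by
          rw [lintegral_indicator (hAmeas (m - j)), ← mul_assoc,
            ← ENNReal.ofReal_mul (Real.rpow_nonneg h2.le _),
            ← Real.rpow_mul h2.le, ← Real.rpow_add h2]
          have hz : -Q * (j:ℝ) + -(j:ℝ) * -Q = 0 := by ring
          rw [hz, Real.rpow_zero, ENNReal.ofReal_one, one_mul]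
  -- Cauchy-Schwarz on each annulus
  have hCS : ∀ (j k : ℤ),
      (∫⁻ y in A k, (‖κ j y‖₊ : ℝ≥0∞) ∂μ) ≤ W k ^ (1/2:ℝ) * ENNReal.ofReal M := by
    intro j k
    have hmeas_pow : ∀ c : ℝ, Measurable fun y : G => ENNReal.ofReal ((1 + qn y) ^ c) :=
      fun c => ENNReal.measurable_ofReal.comp
        ((measurable_const.add hqn_meas).pow measurable_const)
    have hf1m : Measurable ((A k).indicator fun y => ENNReal.ofReal ((1 + qn y) ^ (-s))) :=
      (hmeas_pow (-s)).indicator (hAmeas k)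
    have hf2m : Measurable fun y => ENNReal.ofReal ((1 + qn y) ^ s) * (‖κ j y‖₊ : ℝ≥0∞) :=
      (hmeas_pow s).mul (hκmeas j).enorm
    have heq : (∫⁻ y in A k, (‖κ j y‖₊ : ℝ≥0∞) ∂μ)
        = ∫⁻ y, (((A k).indicator fun y => ENNReal.ofReal ((1 + qn y) ^ (-s))) *
            fun y => ENNReal.ofReal ((1 + qn y) ^ s) * (‖κ j y‖₊ : ℝ≥0∞)) y ∂μ := by
      rw [← lintegral_indicator (hAmeas k)]
      refine lintegral_congr fun y => ?_
      simp only [Pi.mul_apply, Set.indicator_apply]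
      by_cases hy : y ∈ A k
      · simp only [if_pos hy]
        rw [← mul_assoc, ← ENNReal.ofReal_mul (Real.rpow_nonneg (h1qn y).le _),
          ← Real.rpow_add (h1qn y)]
        have hz : -s + s = 0 := by ring
        rw [hz, Real.rpow_zero, ENNReal.ofReal_one, one_mul]
      · simp only [if_neg hy, zero_mul]
    have hH := ENNReal.lintegral_mul_le_Lp_mul_Lq μ
      (⟨by norm_num, by norm_num, by norm_num⟩ : Real.HolderConjugate 2 2)
      hf1m.aemeasurable hf2m.aemeasurable
    have hA2 : (∫⁻ a, ((A k).indicator fun y => ENNReal.ofReal ((1 + qn y) ^ (-s))) a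
        ^ (2:ℝ) ∂μ) = W k := by
      simp only [hW_def]
      rw [← lintegral_indicator (hAmeas k)]
      refine lintegral_congr fun y => ?_
      simp only [Set.indicator_apply]
      by_cases hy : y ∈ A k
      · simp only [if_pos hy]
        rw [ENNReal.ofReal_rpow_of_pos (Real.rpow_pos_of_pos (h1qn y) _),
          ← Real.rpow_mul (h1qn y).le]
        congr 2
        ring
      · simp only [if_neg hy]
        exact ENNReal.zero_rpow_of_pos (by norm_num)
    have hB2 : (∫⁻ a, (ENNReal.ofReal ((1 + qn a) ^ s) * (‖κ j a‖₊ : ℝ≥0∞)) ^ (2:ℝ) ∂μ)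
        ^ (1/2:ℝ) ≤ ENNReal.ofReal M := by
      have he : (∫⁻ a, (ENNReal.ofReal ((1 + qn a) ^ s) * (‖κ j a‖₊ : ℝ≥0∞)) ^ (2:ℝ) ∂μ)
          ^ (1/2:ℝ) = eLpNorm (fun x => ((1 + qn x) ^ s : ℝ) * κ j x) 2 μ := by
        rw [eLpNorm_eq_lintegral_rpow_enorm_toReal (by norm_num) (by norm_num)]
        simp only [ENNReal.toReal_ofNat]
        congr 1
        refine lintegral_congr fun a => ?_
        congr 1
        rw [enorm_eq_nnnorm, nnnorm_mul, ENNReal.coe_mul, Complex.nnnorm_real,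
          ← Real.enorm_eq_ofReal (Real.rpow_nonneg (h1qn a).le _)]
        rfl
      rw [he]
      exact hMb j
    calc (∫⁻ y in A k, (‖κ j y‖₊ : ℝ≥0∞) ∂μ)
        = ∫⁻ y, (((A k).indicator fun y => ENNReal.ofReal ((1 + qn y) ^ (-s))) *
            fun y => ENNReal.ofReal ((1 + qn y) ^ s) * (‖κ j y‖₊ : ℝ≥0∞)) y ∂μ := heq
      _ ≤ (∫⁻ a, ((A k).indicator fun y => ENNReal.ofReal ((1 + qn y) ^ (-s))) a
            ^ (2:ℝ) ∂μ) ^ (1/(2:ℝ)) *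
          (∫⁻ a, (ENNReal.ofReal ((1 + qn a) ^ s) * (‖κ j a‖₊ : ℝ≥0∞)) ^ (2:ℝ) ∂μ)
            ^ (1/(2:ℝ)) := hH
      _ ≤ W k ^ (1/2:ℝ) * ENNReal.ofReal M := by
          rw [hA2]
          exact mul_le_mul_right hB2 _
  -- put everything together
  calc ∑' j : ℤ,
        ∫⁻ x in {x : G | (2 : ℝ) ^ (m : ℝ) ≤ qn x ∧ qn x ≤ (2 : ℝ) ^ ((m : ℝ) + 1)},
          (‖((2 : ℝ) ^ (-Q * (j : ℝ)) : ℝ) * κ j (D ((2 : ℝ) ^ (-(j : ℝ))) x)‖₊ : ℝ≥0∞) ∂μ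
      = ∑' j : ℤ, ∫⁻ y in A (m - j), (‖κ j y‖₊ : ℝ≥0∞) ∂μ := tsum_congr hchange
    _ ≤ ∑' j : ℤ, b (m - j) * ENNReal.ofReal M := by
        refine ENNReal.tsum_le_tsum fun j => ?_
        rw [hb_def]
        exact hCS j (m - j)
    _ = (∑' j : ℤ, b (m - j)) * ENNReal.ofReal M := ENNReal.tsum_mul_right
    _ = S * ENNReal.ofReal M := by
        rw [hS_def]
        congr 1
        exact Equiv.tsum_eq (Equiv.subLeft m) b
    _ ≤ ENNReal.ofReal (S.toReal + 1) * ENNReal.ofReal M := by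
        refine mul_le_mul_left ?_ _
        calc S = ENNReal.ofReal S.toReal := (ENNReal.ofReal_toReal hSfin).symm
          _ ≤ ENNReal.ofReal (S.toReal + 1) := ENNReal.ofReal_le_ofReal (by linarith)
    _ = ENNReal.ofReal ((S.toReal + 1) * M) := (ENNReal.ofReal_mul (by positivity)).symm
end
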